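/- Let F : ℝⁿ → ℝᵐ satisfy the local tangential cone condition with constant η ∈ [0, 1/2), and suppose x⋆ ∈ ℝⁿ satisfies F(x⋆) = 0. Let x_k ∈ ℝⁿ be such that F(x_k) ≠ 0, F'(x_k) has full column rank, and every row ∇F_i(x_k) is nonzero. For each i ∈ {1,…,m}, set p_i = F_i(x_k)² / ‖F(x_k)‖₂² and let y_i = x_k − (F_i(x_k) / ‖∇F_i(x_k)‖₂²) ∇F_i(x_k) be the nonlinear Kaczmarz update with index i. Then the one-step conditional expectation of the nonlinear randomized Kaczmarz method satisfies Σ_{i=1}^{m} p_i ‖y_i − x⋆‖₂² ≤ (1 − (1−2η) / ((1+η)² m κ_F²(F'(x_k)))) ‖x_k − x⋆‖₂², where κ_F(A) = ‖A‖_F / σ_min(A). -/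

import Mathlib

open Matrix

/-- The singular values of a real matrix `A`: square roots of the eigenvalues of `AᵀA`. -/
noncomputable def singVals {m' : Type*} [Fintype m'] {n : ℕ}
    (A : Matrix m' (Fin n) ℝ) : Fin n → ℝ :=
  fun j => Real.sqrt ((show (Aᵀ * A).IsHermitian by
    rw [Matrix.IsHermitian, Matrix.conjTranspose_eq_transpose_of_trivial, Matrix.transpose_mul,
      Matrix.transpose_transpose]).eigenvalues j)

/-- The smallest singular value of `A`. -/
noncomputable def sigmaMin {m' : Type*} [Fintype m'] {n : ℕ}
    (A : Matrix m' (Fin n) ℝ) : ℝ :=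
  ⨅ j, singVals A j

/-- The Frobenius norm of `A`. -/
noncomputable def frobNorm {m' : Type*} [Fintype m'] {n : ℕ}
    (A : Matrix m' (Fin n) ℝ) : ℝ :=
  Real.sqrt (∑ i, ∑ j, (A i j) ^ 2)

/-- The scaled condition number `κ_F(A) = ‖A‖_F / σ_min(A)`. -/
noncomputable def kappaF {m' : Type*} [Fintype m'] {n : ℕ}
    (A : Matrix m' (Fin n) ℝ) : ℝ :=
  frobNorm A / sigmaMin A

lemma rayleigh_lower {n : ℕ} (M : Matrix (Fin n) (Fin n) ℝ) (hM : M.IsHermitian)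
    (c : ℝ) (hc : ∀ j, c ≤ hM.eigenvalues j) (x : EuclideanSpace ℝ (Fin n)) :
    c * ‖x‖ ^ 2 ≤ ∑ j, x j * (M *ᵥ x) j := by
  classical
  set B := hM.eigenvectorBasis with hB
  set lam := hM.eigenvalues with hlam
  have hsym := (Matrix.isHermitian_iff_isSymmetric.mp hM)
  set T := Matrix.toEuclideanLin M with hT
  have hTx : ∀ z : EuclideanSpace ℝ (Fin n), ∀ i, T z i = (M *ᵥ z) i := by
    intro z i
    rw [Matrix.toEuclideanLin_apply]
  have hrepr : ∀ k, B.repr (T x) k = lam k * B.repr x k := by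
    intro k
    rw [B.repr_apply_apply, B.repr_apply_apply, ← hsym (B k) x]
    have h1 : T (B k) = lam k • B k := by
      have h2 := hM.mulVec_eigenvectorBasis k
      ext i
      rw [hTx]
      exact congrFun h2 i
    rw [h1, real_inner_smul_left]
  have hnorm : ‖x‖ ^ 2 = ∑ k, (B.repr x k) ^ 2 := by
    rw [← B.repr.norm_map x, EuclideanSpace.norm_eq, Real.sq_sqrt (by positivity)]
    simp [sq_abs]
  have hinner : ∑ j, x j * (M *ᵥ x) j = ∑ k, B.repr x k * B.repr (T x) k := by
    have h3 : (inner ℝ x (T x) : ℝ) = ∑ j, x j * T x j := by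
      simp only [PiLp.inner_apply, RCLike.inner_apply, starRingEnd_apply, star_trivial]
      exact Finset.sum_congr rfl fun j _ => mul_comm _ _
    have h4 : (inner ℝ (B.repr x) (B.repr (T x)) : ℝ) = ∑ k, B.repr x k * B.repr (T x) k := by
      simp only [PiLp.inner_apply, RCLike.inner_apply, starRingEnd_apply, star_trivial]
      exact Finset.sum_congr rfl fun j _ => mul_comm _ _
    rw [← h4, B.repr.inner_map_map, h3]
    exact Finset.sum_congr rfl fun j _ => by rw [hTx]
  rw [hinner, hnorm, Finset.mul_sum]
  apply Finset.sum_le_sum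
  intro k _
  rw [hrepr k]
  have := hc k
  nlinarith [sq_nonneg (B.repr x k)]

lemma quad_eq {m n : ℕ} (A : Matrix (Fin m) (Fin n) ℝ) (x : Fin n → ℝ) :
    ∑ j, x j * ((Aᴴ * A) *ᵥ x) j = ∑ i, ((A *ᵥ x) i) ^ 2 := by
  rw [← Matrix.mulVec_mulVec]
  calc ∑ j, x j * (Aᴴ *ᵥ (A *ᵥ x)) j
      = ∑ j, ∑ i, x j * (A i j * (A *ᵥ x) i) := by
        refine Finset.sum_congr rfl fun j _ => ?_
        simp [Matrix.mulVec, dotProduct, Matrix.conjTranspose_apply, Finset.mul_sum]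
    _ = ∑ i, ∑ j, x j * (A i j * (A *ᵥ x) i) := Finset.sum_comm
    _ = ∑ i, ((A *ᵥ x) i) ^ 2 := by
        refine Finset.sum_congr rfl fun i _ => ?_
        have h : ∑ j, x j * (A i j * (A *ᵥ x) i) = (∑ j, A i j * x j) * (A *ᵥ x) i := by
          rw [Finset.sum_mul]
          exact Finset.sum_congr rfl fun j _ => by ring
        rw [h, sq]
        rfl

lemma mulVec_ne_zero {m n : ℕ} (A : Matrix (Fin m) (Fin n) ℝ) (hrank : A.rank = n)
    (x : Fin n → ℝ) (hx : x ≠ 0) : A *ᵥ x ≠ 0 := by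
  have hker : LinearMap.ker A.mulVecLin = ⊥ := by
    have h1 := LinearMap.finrank_range_add_finrank_ker A.mulVecLin
    have h2 : Module.finrank ℝ (Fin n → ℝ) = n := by simp
    rw [h2] at h1
    have h3 : Module.finrank ℝ (LinearMap.range A.mulVecLin) = n := hrank
    rw [h3] at h1
    have h4 : Module.finrank ℝ (LinearMap.ker A.mulVecLin) = 0 := by omega
    exact Submodule.finrank_eq_zero.mp h4
  intro h
  exact hx (by simpa [hker] using LinearMap.mem_ker.mpr (show A.mulVecLin x = 0 from h))

lemma posdef_of_rank {m n : ℕ} (A : Matrix (Fin m) (Fin n) ℝ) (hrank : A.rank = n) :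
    (Aᴴ * A).PosDef := by
  refine Matrix.PosDef.of_dotProduct_mulVec_pos (Matrix.isHermitian_conjTranspose_mul_self A) fun x hx => ?_
  have h1 : star x = x := by simp
  rw [h1]
  have h2 : dotProduct x ((Aᴴ * A) *ᵥ x) = ∑ j, x j * ((Aᴴ * A) *ᵥ x) j := rfl
  rw [h2, quad_eq]
  have h3 := mulVec_ne_zero A hrank x hx
  have h4 : ∃ i, (A *ᵥ x) i ≠ 0 := by
    by_contra h
    push_neg at h
    exact h3 (funext h)
  obtain ⟨i0, hi0⟩ := h4
  have h5 : (0:ℝ) < ((A *ᵥ x) i0) ^ 2 := by positivity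
  have h6 := Finset.single_le_sum (f := fun i => ((A *ᵥ x) i) ^ 2)
    (fun i _ => sq_nonneg _) (Finset.mem_univ i0)
  simpa using lt_of_lt_of_le h5 h6

lemma sigmaMin_nonneg {m' : Type*} [Fintype m'] {n : ℕ} (A : Matrix m' (Fin n) ℝ) :
    0 ≤ sigmaMin A :=
  Real.iInf_nonneg fun _ => Real.sqrt_nonneg _

lemma sq_sigmaMin_le {m' : Type*} [Fintype m'] {n : ℕ} (A : Matrix m' (Fin n) ℝ) (j : Fin n) :
    sigmaMin A ^ 2 ≤ (Matrix.isHermitian_conjTranspose_mul_self A).eigenvalues j := by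
  have h1 : sigmaMin A ≤ singVals A j :=
    ciInf_le (Set.Finite.bddBelow (Set.finite_range _)) j
  have h2 := pow_le_pow_left₀ (sigmaMin_nonneg A) h1 2
  rwa [show singVals A j ^ 2 = (Matrix.isHermitian_conjTranspose_mul_self A).eigenvalues j from
    Real.sq_sqrt (Matrix.eigenvalues_conjTranspose_mul_self_nonneg A j)] at h2

lemma sigmaMin_pos {m n : ℕ} (A : Matrix (Fin m) (Fin n) ℝ) (hrank : A.rank = n)
    (hn : 0 < n) : 0 < sigmaMin A := by
  haveI : Nonempty (Fin n) := ⟨⟨0, hn⟩⟩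
  have hpd := posdef_of_rank A hrank
  have hpos : ∀ j, 0 < singVals A j := fun j =>
    Real.sqrt_pos.mpr (hpd.eigenvalues_pos j)
  obtain ⟨j0, hj0⟩ := Finite.exists_min (singVals A)
  exact lt_of_lt_of_le (hpos j0) (le_ciInf hj0)

lemma scalar_lb (f q η : ℝ) (hη0 : 0 ≤ η) (h : |f - q| ≤ η * |f|) :
    (1 - η) * f ^ 2 ≤ f * q := by
  have h2 : f * (f - q) ≤ |f| * |f - q| := by
    calc f * (f - q) ≤ |f * (f - q)| := le_abs_self _
      _ = |f| * |f - q| := abs_mul _ _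
  have h3 : |f| * |f - q| ≤ |f| * (η * |f|) := mul_le_mul_of_nonneg_left h (abs_nonneg _)
  have h4 : |f| * (η * |f|) = η * f ^ 2 := by rw [← sq_abs]; ring
  nlinarith

lemma scalar_ub (f q η : ℝ) (hη0 : 0 ≤ η) (h : |f - q| ≤ η * |f|) :
    q ^ 2 ≤ (1 + η) ^ 2 * f ^ 2 := by
  have h1 := abs_le.mp h
  have h2 := le_abs_self f
  have h3 := neg_abs_le f
  have h4 := sq_abs f
  have h5 := abs_nonneg f
  have hub : q ≤ (1 + η) * |f| := by nlinarith
  have hlb : -((1 + η) * |f|) ≤ q := by nlinarith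
  nlinarith [mul_nonneg (sub_nonneg.mpr hub) (by linarith : 0 ≤ q + (1 + η) * |f|)]

lemma step_bound {n : ℕ} (d gi : EuclideanSpace ℝ (Fin n)) (fi η : ℝ) (hgi : gi ≠ 0)
    (hkey : (1 - η) * fi ^ 2 ≤ fi * (inner ℝ d gi : ℝ)) :
    ‖d - (fi / ‖gi‖ ^ 2) • gi‖ ^ 2 ≤ ‖d‖ ^ 2 - (1 - 2 * η) * (fi ^ 2 / ‖gi‖ ^ 2) := by
  have hG : (0:ℝ) < ‖gi‖ ^ 2 := by
    have := norm_pos_iff.mpr hgi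
    positivity
  rw [norm_sub_sq_real, real_inner_smul_right]
  have hns : ‖(fi / ‖gi‖ ^ 2) • gi‖ ^ 2 = fi ^ 2 / ‖gi‖ ^ 2 := by
    rw [norm_smul, mul_pow, Real.norm_eq_abs, sq_abs, div_pow]
    field_simp
  rw [hns]
  have h8 : (1 - η) * fi ^ 2 / ‖gi‖ ^ 2 ≤ fi * (inner ℝ d gi : ℝ) / ‖gi‖ ^ 2 := by
    gcongr
  have h9 : (1 - η) * fi ^ 2 / ‖gi‖ ^ 2 = (1 - η) * (fi ^ 2 / ‖gi‖ ^ 2) := by ring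
  have h10 : fi * (inner ℝ d gi : ℝ) / ‖gi‖ ^ 2 = fi / ‖gi‖ ^ 2 * (inner ℝ d gi : ℝ) := by ring
  rw [h9, h10] at h8
  linarith

set_option maxHeartbeats 1000000 in
/-- Theorem 1: the one-step conditional expectation of the nonlinear
randomized Kaczmarz method, with probabilities `p_i = F_i(x_k)²/‖F(x_k)‖₂²` and updates
`y_i = x_k − (F_i(x_k)/‖∇F_i(x_k)‖₂²) ∇F_i(x_k)`, satisfies
`Σ_i p_i ‖y_i − x⋆‖₂² ≤ (1 − (1−2η)/((1+η)² m κ_F²(F'(x_k)))) ‖x_k − x⋆‖₂²`. -/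
theorem nrk_expected_step
    {n m : ℕ}
    (F : Fin m → EuclideanSpace ℝ (Fin n) → ℝ)
    (grad : Fin m → EuclideanSpace ℝ (Fin n) → EuclideanSpace ℝ (Fin n))
    (η : ℝ) (hη0 : 0 ≤ η) (hη : η < 1 / 2)
    -- F is differentiable with Jacobian whose i-th row is ∇F_i
    (hdiff : ∀ i x, HasGradientAt (F i) (grad i x) x)
    -- local tangential cone condition with constant η
    (hltcc : ∀ i (x₁ x₂ : EuclideanSpace ℝ (Fin n)),
      |F i x₁ - F i x₂ - ∑ j, grad i x₁ j * (x₁ j - x₂ j)| ≤ η * |F i x₁ - F i x₂|)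
    (xstar : EuclideanSpace ℝ (Fin n)) (hstar : ∀ i, F i xstar = 0)
    (xk : EuclideanSpace ℝ (Fin n))
    -- F(x_k) ≠ 0
    (hFk : ∃ i, F i xk ≠ 0)
    -- the full Jacobian F'(x_k)
    (J : Matrix (Fin m) (Fin n) ℝ)
    (hJdef : J = Matrix.of fun (i : Fin m) (j : Fin n) => grad i xk j)
    -- F'(x_k) has full column rank
    (hrank : J.rank = n)
    -- every row ∇F_i(x_k) is nonzero
    (hrows : ∀ i, grad i xk ≠ 0)
    -- probabilities p_i = F_i(x_k)² / ‖F(x_k)‖₂²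
    (p : Fin m → ℝ) (hp : ∀ i, p i = (F i xk) ^ 2 / ∑ j, (F j xk) ^ 2)
    -- nonlinear Kaczmarz updates y_i = x_k − (F_i(x_k)/‖∇F_i(x_k)‖₂²) ∇F_i(x_k)
    (y : Fin m → EuclideanSpace ℝ (Fin n))
    (hy : ∀ i, y i = xk - (F i xk / ‖grad i xk‖ ^ 2) • grad i xk) :
    ∑ i, p i * ‖y i - xstar‖ ^ 2
      ≤ (1 - (1 - 2 * η) / ((1 + η) ^ 2 * (m : ℝ) * kappaF J ^ 2))
          * ‖xk - xstar‖ ^ 2 := by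
  classical
  obtain ⟨i0, hi0⟩ := hFk
  rcases Nat.eq_zero_or_pos n with hn | hn
  · exfalso
    subst hn
    exact hrows i0 (by ext j; exact j.elim0)
  have hm : 0 < m := i0.pos
  set d : EuclideanSpace ℝ (Fin n) := xk - xstar with hd
  set S : ℝ := ∑ j, (F j xk) ^ 2 with hS
  have hSpos : 0 < S := by
    have h1 : (0:ℝ) < (F i0 xk) ^ 2 := by positivity
    have h2 := Finset.single_le_sum (f := fun i => (F i xk) ^ 2)
      (fun i _ => sq_nonneg _) (Finset.mem_univ i0)
    exact lt_of_lt_of_le h1 h2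
  have hGpos : ∀ i, (0:ℝ) < ‖grad i xk‖ ^ 2 := fun i => by
    have := norm_pos_iff.mpr (hrows i)
    positivity
  have hGsum : ∀ i, ‖grad i xk‖ ^ 2 = ∑ j, (grad i xk j) ^ 2 := by
    intro i
    rw [EuclideanSpace.norm_eq, Real.sq_sqrt (by positivity)]
    simp [sq_abs]
  -- the row-vs-difference inner products
  have key1 : ∀ i, |F i xk - ∑ j, grad i xk j * (xk j - xstar j)| ≤ η * |F i xk| := by
    intro i
    have h := hltcc i xk xstar
    rwa [hstar i, sub_zero] at h
  have hdapp : ∀ j, d j = xk j - xstar j := fun j => rfl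
  have hipinner : ∀ i, (inner ℝ d (grad i xk) : ℝ) = ∑ j, grad i xk j * (xk j - xstar j) := by
    intro i
    simp only [PiLp.inner_apply, RCLike.inner_apply, starRingEnd_apply, star_trivial]
    exact Finset.sum_congr rfl fun j _ => by rw [hdapp j]
  -- per-index bound
  have hyb : ∀ i, ‖y i - xstar‖ ^ 2
      ≤ ‖d‖ ^ 2 - (1 - 2 * η) * ((F i xk) ^ 2 / ‖grad i xk‖ ^ 2) := by
    intro i
    have hyeq : y i - xstar = d - (F i xk / ‖grad i xk‖ ^ 2) • grad i xk := by
      rw [hy i, hd, sub_right_comm]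
    rw [hyeq]
    apply step_bound _ _ _ _ (hrows i)
    rw [hipinner i]
    exact scalar_lb _ _ _ hη0 (key1 i)
  have hpnn : ∀ i, 0 ≤ p i := fun i => by rw [hp i]; positivity
  set T : ℝ := ∑ i, (F i xk) ^ 4 / ‖grad i xk‖ ^ 2 with hT
  have hTnn : 0 ≤ T := Finset.sum_nonneg fun i _ => by positivity
  have hsum1 : ∑ i, p i = 1 := by
    have : ∀ i ∈ Finset.univ, p i = (F i xk) ^ 2 / S := fun i _ => hp i
    rw [Finset.sum_congr rfl this, ← Finset.sum_div]
    exact div_self hSpos.ne'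
  have hmain1 : ∑ i, p i * ‖y i - xstar‖ ^ 2 ≤ ‖d‖ ^ 2 - (1 - 2 * η) / S * T := by
    calc ∑ i, p i * ‖y i - xstar‖ ^ 2
        ≤ ∑ i, p i * (‖d‖ ^ 2 - (1 - 2 * η) * ((F i xk) ^ 2 / ‖grad i xk‖ ^ 2)) :=
          Finset.sum_le_sum fun i _ => mul_le_mul_of_nonneg_left (hyb i) (hpnn i)
      _ = ∑ i, (p i * ‖d‖ ^ 2 - (1 - 2 * η) / S * ((F i xk) ^ 4 / ‖grad i xk‖ ^ 2)) := by
          refine Finset.sum_congr rfl fun i _ => ?_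
          rw [hp i]
          have hGi := (hGpos i).ne'
          have hSne := hSpos.ne'
          field_simp
      _ = (∑ i, p i * ‖d‖ ^ 2) - ∑ i, (1 - 2 * η) / S * ((F i xk) ^ 4 / ‖grad i xk‖ ^ 2) :=
          Finset.sum_sub_distrib _ _
      _ = ‖d‖ ^ 2 - (1 - 2 * η) / S * T := by
          rw [← Finset.sum_mul, hsum1, one_mul, ← Finset.mul_sum, hT]
  -- Frobenius norm
  have hφsum : ∑ i, ∑ j, (J i j) ^ 2 = ∑ i, ‖grad i xk‖ ^ 2 := by
    refine Finset.sum_congr rfl fun i _ => ?_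
    rw [hGsum i]
    exact Finset.sum_congr rfl fun j _ => by rw [hJdef]; rfl
  have hφpos : 0 < frobNorm J := by
    rw [frobNorm]
    apply Real.sqrt_pos.mpr
    rw [hφsum]
    have h1 := hGpos i0
    have h2 := Finset.single_le_sum (f := fun i => ‖grad i xk‖ ^ 2)
      (fun i _ => sq_nonneg _) (Finset.mem_univ i0)
    exact lt_of_lt_of_le h1 h2
  have hφ2 : frobNorm J ^ 2 = ∑ i, ‖grad i xk‖ ^ 2 := by
    rw [frobNorm, Real.sq_sqrt (by positivity)]
    exact hφsum
  -- Cauchy–Schwarz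
  have hCS : S ^ 2 ≤ T * frobNorm J ^ 2 := by
    rw [hφ2]
    have hcs := Finset.sum_mul_sq_le_sq_mul_sq Finset.univ
      (fun i => (F i xk) ^ 2 / Real.sqrt (‖grad i xk‖ ^ 2))
      (fun i => Real.sqrt (‖grad i xk‖ ^ 2))
    have e1 : ∀ i ∈ Finset.univ,
        (F i xk) ^ 2 / Real.sqrt (‖grad i xk‖ ^ 2) * Real.sqrt (‖grad i xk‖ ^ 2)
          = (F i xk) ^ 2 := fun i _ =>
      div_mul_cancel₀ _ (Real.sqrt_pos.mpr (hGpos i)).ne'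
    have e2 : ∀ i ∈ Finset.univ,
        ((F i xk) ^ 2 / Real.sqrt (‖grad i xk‖ ^ 2)) ^ 2
          = (F i xk) ^ 4 / ‖grad i xk‖ ^ 2 := fun i _ => by
      rw [div_pow, Real.sq_sqrt (hGpos i).le, ← pow_mul]
    have e3 : ∀ i ∈ Finset.univ,
        (Real.sqrt (‖grad i xk‖ ^ 2)) ^ 2 = ‖grad i xk‖ ^ 2 := fun i _ =>
      Real.sq_sqrt (hGpos i).le
    rw [Finset.sum_congr rfl e1, Finset.sum_congr rfl e2, Finset.sum_congr rfl e3] at hcs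
    exact hcs
  -- Rayleigh lower bound
  have hR : sigmaMin J ^ 2 * ‖d‖ ^ 2 ≤ (1 + η) ^ 2 * S := by
    have h1 := rayleigh_lower (Jᴴ * J) (Matrix.isHermitian_conjTranspose_mul_self J)
      (sigmaMin J ^ 2) (sq_sigmaMin_le J) d
    rw [quad_eq J d] at h1
    have h3 : ∀ i ∈ Finset.univ, ((J *ᵥ (d : Fin n → ℝ)) i) ^ 2
        = (∑ j, grad i xk j * (xk j - xstar j)) ^ 2 := by
      intro i _
      congr 1
      simp only [Matrix.mulVec, dotProduct]
      exact Finset.sum_congr rfl fun j _ => by rw [hJdef, hdapp j]; rfl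
    rw [Finset.sum_congr rfl h3] at h1
    have h5 : ∑ i, (∑ j, grad i xk j * (xk j - xstar j)) ^ 2
        ≤ ∑ i, (1 + η) ^ 2 * (F i xk) ^ 2 :=
      Finset.sum_le_sum fun i _ => scalar_ub _ _ _ hη0 (key1 i)
    rw [← Finset.mul_sum, ← hS] at h5
    linarith
  have hσ := sigmaMin_pos J hrank hn
  -- final assembly
  have hm1 : (1:ℝ) ≤ m := by exact_mod_cast hm
  have h12 : (0:ℝ) ≤ 1 - 2 * η := by linarith
  have hDnn : (0:ℝ) ≤ ‖d‖ ^ 2 := sq_nonneg _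
  set σ : ℝ := sigmaMin J with hσdef
  set φ : ℝ := frobNorm J with hφdef
  have hkappa : kappaF J = φ / σ := rfl
  set D : ℝ := ‖d‖ ^ 2 with hDdef
  rw [hkappa]
  clear_value σ φ S T D
  clear hσdef hφdef hS hT hDdef hp hy hsum1 hyb hGsum hGpos key1 hipinner hdapp hφsum
  have hkey : (1 - 2 * η) / ((1 + η) ^ 2 * (m : ℝ) * (φ / σ) ^ 2) * D
      ≤ (1 - 2 * η) / S * T := by
    rw [div_pow]
    have hσne := hσ.ne'
    have hφne := hφpos.ne'
    have hmne : ((m : ℝ)) ≠ 0 := Nat.cast_ne_zero.mpr hm.ne'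
    have heq : (1 - 2 * η) / ((1 + η) ^ 2 * (m : ℝ) * (φ ^ 2 / σ ^ 2)) * D
        = (1 - 2 * η) * (σ ^ 2 * D)
            / ((1 + η) ^ 2 * (m : ℝ) * φ ^ 2) := by
      field_simp
    have h1e : (0:ℝ) < 1 + η := by linarith
    rw [heq, div_mul_eq_mul_div, div_le_div_iff₀ (by positivity) hSpos]
    have c1 : (1 - 2 * η) * (σ ^ 2 * D) * S
        ≤ (1 - 2 * η) * ((1 + η) ^ 2 * S) * S := by
      have h2 := mul_le_mul_of_nonneg_left (mul_le_mul_of_nonneg_right hR hSpos.le) h12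
      linarith
    have c2 : (1 - 2 * η) * ((1 + η) ^ 2 * S) * S ≤ (1 - 2 * η) * (1 + η) ^ 2 * (T * φ ^ 2) := by
      have h := mul_le_mul_of_nonneg_left hCS (by positivity : (0:ℝ) ≤ (1 - 2 * η) * (1 + η) ^ 2)
      linarith
    have c3 : (1 - 2 * η) * (1 + η) ^ 2 * (T * φ ^ 2)
        ≤ (1 - 2 * η) * T * ((1 + η) ^ 2 * (m : ℝ) * φ ^ 2) := by
      have hbase : (0:ℝ) ≤ (1 - 2 * η) * (1 + η) ^ 2 * (T * φ ^ 2) := by positivity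
      have h2 := mul_le_mul_of_nonneg_left hm1 hbase
      linarith
    linarith
  have hgoal : (1 - (1 - 2 * η) / ((1 + η) ^ 2 * (m : ℝ) * (φ / σ) ^ 2)) * D
      = D - (1 - 2 * η) / ((1 + η) ^ 2 * (m : ℝ) * (φ / σ) ^ 2) * D := by
    ring
  rw [hgoal]
  linarith
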